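/- Let P and Q be probability measures on ℕ with P = Bin(p_1, …, p_n) (law of a sum of independent Bernoulli(p_i)) and Q = Bin(q_1, …, q_n), where q and p agree except in two coordinates i ≠ j, with q_i + q_j = p_i + p_j. Let f^{ij} be the law of the sum without coordinates i and j. Then for every integer t, P({t}) − Q({t}) = (p_i p_j − q_i q_j)(f^{ij}(t) − 2 f^{ij}(t−1) + f^{ij}(t−2)), and Σ_{s ≥ t}(P({s}) − Q({s})) = (p_i p_j − q_i q_j)(f^{ij}(t−2) − f^{ij}(t−1)). -/

import Mathlib

open Finset

/-- The probability that the sum of independent Bernoulli(`p l`) variables over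
indices `l ∈ s` equals `t` (zero for `t < 0`). -/
noncomputable def binProbOn {ι : Type*} [DecidableEq ι] (s : Finset ι) (p : ι → ℝ) (t : ℤ) : ℝ :=
  ∑ S ∈ s.powerset.filter (fun S => (S.card : ℤ) = t), (∏ l ∈ S, p l) * ∏ l ∈ s \ S, (1 - p l)

lemma binProbOn_congr {ι : Type*} [DecidableEq ι] (s : Finset ι) (p q : ι → ℝ)
    (h : ∀ l ∈ s, p l = q l) (t : ℤ) : binProbOn s p t = binProbOn s q t := by
  unfold binProbOn
  refine Finset.sum_congr rfl fun S hS => ?_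
  have hSs : S ⊆ s := Finset.mem_powerset.mp (Finset.mem_filter.mp hS).1
  exact congrArg₂ (· * ·) (Finset.prod_congr rfl fun l hl => h l (hSs hl))
    (Finset.prod_congr rfl fun l hl => by rw [h l (Finset.sdiff_subset hl)])

lemma binProbOn_eq_zero_of_lt {ι : Type*} [DecidableEq ι] (s : Finset ι) (p : ι → ℝ)
    (t : ℤ) (ht : (s.card : ℤ) < t) : binProbOn s p t = 0 := by
  unfold binProbOn
  rw [Finset.filter_false_of_mem, Finset.sum_empty]
  intro S hS hc
  have := Finset.card_le_card (Finset.mem_powerset.mp hS)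
  omega

lemma binProbOn_insert {ι : Type*} [DecidableEq ι] (s : Finset ι) (p : ι → ℝ) (i : ι)
    (hi : i ∉ s) (t : ℤ) :
    binProbOn (insert i s) p t
      = (1 - p i) * binProbOn s p t + p i * binProbOn s p (t - 1) := by
  unfold binProbOn
  have hdisj : Disjoint (s.powerset.filter (fun S => (S.card : ℤ) = t))
      ((s.powerset.image (insert i)).filter (fun S => (S.card : ℤ) = t)) := by
    rw [Finset.disjoint_left]
    intro S hS1 hS2
    have h1 : S ⊆ s := Finset.mem_powerset.mp (Finset.mem_filter.mp hS1).1
    obtain ⟨T, _, hT⟩ := Finset.mem_image.mp (Finset.mem_filter.mp hS2).1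
    exact hi (h1 (hT ▸ Finset.mem_insert_self i T))
  rw [Finset.powerset_insert, Finset.filter_union, Finset.sum_union hdisj]
  congr 1
  · rw [Finset.mul_sum]
    refine Finset.sum_congr rfl fun S hS => ?_
    have hSs : S ⊆ s := Finset.mem_powerset.mp (Finset.mem_filter.mp hS).1
    have hiS : i ∉ s \ S := fun h => hi (Finset.mem_sdiff.mp h).1
    rw [Finset.insert_sdiff_of_notMem _ (fun h => hi (hSs h)),
      Finset.prod_insert hiS]
    ring
  · have himg : (Finset.image (insert i) s.powerset).filter (fun S => (S.card : ℤ) = t)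
        = Finset.image (insert i) (s.powerset.filter (fun S => (S.card : ℤ) = t - 1)) := by
      rw [Finset.filter_image]
      congr 1
      apply Finset.filter_congr
      intro S hS
      have hiS : i ∉ S := fun h => hi (Finset.mem_powerset.mp hS h)
      rw [Finset.card_insert_of_notMem hiS]
      push_cast
      constructor <;> intro <;> omega
    rw [himg, Finset.sum_image, Finset.mul_sum]
    · refine Finset.sum_congr rfl fun S hS => ?_
      have hSs : S ⊆ s := Finset.mem_powerset.mp (Finset.mem_filter.mp hS).1
      have hiS : i ∉ S := fun h => hi (hSs h)
      have hsd : insert i s \ insert i S = s \ S := by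
        ext l
        simp only [Finset.mem_sdiff, Finset.mem_insert, not_or]
        constructor
        · rintro ⟨h1 | h1, h2, h3⟩
          · exact absurd h1 h2
          · exact ⟨h1, h3⟩
        · rintro ⟨h1, h2⟩
          exact ⟨Or.inr h1, fun e => hi (e ▸ h1), h2⟩
      rw [hsd, Finset.prod_insert hiS]
      ring
    · intro x hx y hy hxy
      have hix : i ∉ x := fun h => hi (Finset.mem_powerset.mp (Finset.mem_filter.mp hx).1 h)
      have hiy : i ∉ y := fun h => hi (Finset.mem_powerset.mp (Finset.mem_filter.mp hy).1 h)
      rw [← Finset.erase_insert hix, hxy, Finset.erase_insert hiy]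

lemma tele_sum (h : ℤ → ℝ) (B : ℤ) (hB : ∀ s, B ≤ s → h s = 0) (t : ℤ) :
    (∑' s : ℤ, if t ≤ s then h s - h (s - 1) else 0) = - h (t - 1) := by
  set m := (B + 1 - t).toNat with hm
  rw [tsum_eq_sum (s := (Finset.range m).image (fun k : ℕ => t + (k : ℤ)))
    (by
      intro b hb
      simp only [Finset.mem_image, Finset.mem_range, not_exists, not_and] at hb
      by_cases hle : t ≤ b
      · have h1 := hb (b - t).toNat
        rw [if_pos hle, hB b (by omega), hB (b - 1) (by omega), sub_self]
      · rw [if_neg hle])]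
  rw [Finset.sum_image (by intro x hx y hy hxy; have h' : t + (x : ℤ) = t + (y : ℤ) := hxy; omega)]
  have hcongr : ∀ k ∈ Finset.range m,
      (if t ≤ t + (k : ℤ) then h (t + (k : ℤ)) - h (t + (k : ℤ) - 1) else 0)
        = h (t - 1 + ((k + 1 : ℕ) : ℤ)) - h (t - 1 + ((k : ℕ) : ℤ)) := by
    intro k _
    have e1 : t + (k : ℤ) = t - 1 + ((k + 1 : ℕ) : ℤ) := by push_cast; ring
    have e2 : t + (k : ℤ) - 1 = t - 1 + ((k : ℕ) : ℤ) := by push_cast; ring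
    rw [if_pos (by omega), e2, e1]
  rw [Finset.sum_congr rfl hcongr, Finset.sum_range_sub (fun k : ℕ => h (t - 1 + (k : ℤ))) m]
  have hz : h (t - 1 + (m : ℤ)) = 0 := by
    rcases le_or_gt t (B + 1) with hc | hc
    · have : t - 1 + (m : ℤ) = B := by omega
      rw [this]; exact hB B le_rfl
    · exact hB _ (by omega)
  rw [hz]
  norm_num

theorem stmt_13 (n : ℕ) (p q : Fin n → ℝ)
    (hp : ∀ l, 0 ≤ p l ∧ p l ≤ 1) (hq : ∀ l, 0 ≤ q l ∧ q l ≤ 1)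
    (i j : Fin n) (hij : i ≠ j)
    (hagree : ∀ l, l ≠ i → l ≠ j → q l = p l)
    (hsum : q i + q j = p i + p j) :
    (∀ t : ℤ,
      binProbOn Finset.univ p t - binProbOn Finset.univ q t =
        (p i * p j - q i * q j) *
          (binProbOn (Finset.univ \ {i, j}) p t
            - 2 * binProbOn (Finset.univ \ {i, j}) p (t - 1)
            + binProbOn (Finset.univ \ {i, j}) p (t - 2))) ∧
    (∀ t : ℤ,
      (∑' s : ℤ, if t ≤ s then binProbOn Finset.univ p s - binProbOn Finset.univ q s else 0) =
        (p i * p j - q i * q j) *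
          (binProbOn (Finset.univ \ {i, j}) p (t - 2)
            - binProbOn (Finset.univ \ {i, j}) p (t - 1))) := by
  set u : Finset (Fin n) := Finset.univ \ {i, j} with hu
  have hju : j ∉ u := by simp [hu]
  have hiu : i ∉ insert j u := by simp [hu, hij]
  have huniv : insert i (insert j u) = (Finset.univ : Finset (Fin n)) := by
    ext l
    simp only [hu, Finset.mem_insert, Finset.mem_sdiff, Finset.mem_univ, true_and,
      Finset.mem_insert, Finset.mem_singleton, not_or]
    constructor
    · intro _; trivial
    · intro _
      by_cases h1 : l = i
      · exact Or.inl h1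
      · by_cases h2 : l = j
        · exact Or.inr (Or.inl h2)
        · exact Or.inr (Or.inr ⟨h1, h2⟩)
  have hcq : ∀ t' : ℤ, binProbOn u q t' = binProbOn u p t' := by
    intro t'
    apply binProbOn_congr
    intro l hl
    simp only [hu, Finset.mem_sdiff, Finset.mem_insert, Finset.mem_singleton, not_or] at hl
    exact hagree l hl.2.1 hl.2.2
  have key : ∀ t : ℤ,
      binProbOn Finset.univ p t - binProbOn Finset.univ q t =
        (p i * p j - q i * q j) *
          (binProbOn u p t - 2 * binProbOn u p (t - 1) + binProbOn u p (t - 2)) := by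
    intro t
    have e : t - 1 - 1 = t - 2 := by ring
    rw [← huniv, binProbOn_insert _ p _ hiu, binProbOn_insert _ q _ hiu,
      binProbOn_insert _ p _ hju, binProbOn_insert _ q _ hju,
      binProbOn_insert _ p _ hju (t - 1), binProbOn_insert _ q _ hju (t - 1),
      e, hcq, hcq, hcq]
    linear_combination (binProbOn u p t - binProbOn u p (t - 1)) * hsum
  refine ⟨key, fun t => ?_⟩
  have hn : 2 ≤ n := by
    have h1 : (i : ℕ) < n := i.isLt
    have h2 : (j : ℕ) < n := j.isLt
    have h3 : (i : ℕ) ≠ (j : ℕ) := fun h => hij (Fin.ext h)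
    omega
  have hcard : (u.card : ℤ) = (n : ℤ) - 2 := by
    have h2 : ({i, j} : Finset (Fin n)).card = 2 := by
      rw [Finset.card_insert_of_notMem (by simpa using hij), Finset.card_singleton]
    have : u.card = n - 2 := by
      rw [hu, Finset.card_sdiff_of_subset (Finset.subset_univ _), h2, Finset.card_univ, Fintype.card_fin]
    omega
  set c := p i * p j - q i * q j with hc
  have hB : ∀ s : ℤ, (n : ℤ) ≤ s →
      c * (binProbOn u p s - binProbOn u p (s - 1)) = 0 := by
    intro s hs
    rw [binProbOn_eq_zero_of_lt _ _ _ (by omega), binProbOn_eq_zero_of_lt _ _ _ (by omega)]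
    ring
  have hterm : ∀ s : ℤ,
      (if t ≤ s then binProbOn Finset.univ p s - binProbOn Finset.univ q s else 0)
        = (if t ≤ s then
            (fun s => c * (binProbOn u p s - binProbOn u p (s - 1))) s
              - (fun s => c * (binProbOn u p s - binProbOn u p (s - 1))) (s - 1) else 0) := by
    intro s
    by_cases hle : t ≤ s
    · rw [if_pos hle, if_pos hle, key s]
      have e : s - 1 - 1 = s - 2 := by ring
      simp only [e]
      ring
    · rw [if_neg hle, if_neg hle]
  rw [tsum_congr hterm, tele_sum _ (n : ℤ) hB t]
  have e : t - 1 - 1 = t - 2 := by ring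
  rw [e]
  ring
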